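/- The price of anarchy of the EQUI policy on uniform machines is Ω(log m): for every k there is an instance with m = 1 + (2/3)(4^k − 1) + 2·4^{k−1} machines whose optimal makespan is at most 3 and which admits a (strong) Nash equilibrium of makespan k + 2. -/

import Mathlib

/-- Load of machine `j` (job lengths `p`). -/
def uLoad {n m : ℕ} (p : Fin n → ℝ) (σ : Fin n → Fin m) (j : Fin m) : ℝ :=
  ∑ i ∈ Finset.univ.filter (fun i => σ i = j), p i

/-- EQUI cost of job `i` on uniform machines with speeds `s`:
`(1/s_{σ i}) Σ_{i' : σ i' = σ i} min(p_i, p_{i'})`. -/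
noncomputable def uEquiCost {n m : ℕ} (p : Fin n → ℝ) (s : Fin m → ℝ)
    (σ : Fin n → Fin m) (i : Fin n) : ℝ :=
  (s (σ i))⁻¹ * ∑ i' ∈ Finset.univ.filter (fun i' => σ i' = σ i), min (p i) (p i')

/-- Pure Nash equilibrium under EQUI on uniform machines. -/
def uEquiNE {n m : ℕ} (p : Fin n → ℝ) (s : Fin m → ℝ) (σ : Fin n → Fin m) : Prop :=
  ∀ (i : Fin n) (b : Fin m), uEquiCost p s σ i ≤ uEquiCost p s (Function.update σ i b) i

/-- Strong Nash equilibrium under EQUI on uniform machines. -/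
def uEquiStrongNE {n m : ℕ} (p : Fin n → ℝ) (s : Fin m → ℝ) (σ : Fin n → Fin m) : Prop :=
  ¬ ∃ (S : Finset (Fin n)) (σ' : Fin n → Fin m), S.Nonempty ∧
      (∀ i ∉ S, σ' i = σ i) ∧ ∀ i ∈ S, uEquiCost p s σ' i < uEquiCost p s σ i

namespace EquiPoA

theorem log2_le' {t K : ℕ} (h : t < 2^(K+1)) : Nat.log 2 t ≤ K := by
  rcases Nat.eq_zero_or_pos t with h0 | h0
  · simp [h0]
  · have := Nat.log_lt_of_lt_pow (y := t) (b := 2) (x := K+1) h0.ne' h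
    omega

theorem one_le_log2 {t : ℕ} (h : 2 ≤ t) : 1 ≤ Nat.log 2 t :=
  (Nat.le_log_iff_pow_le (b := 2) (x := 1) (y := t) (by norm_num) (by omega)).2 (by simpa using h)

theorem two_pow_ge (d : ℕ) : (d:ℝ) + 1 ≤ 2^d := by
  induction d with
  | zero => norm_num
  | succ n ih =>
    have : (0:ℝ) ≤ 2^n := by positivity
    push_cast
    rw [pow_succ]
    nlinarith

theorem geomSum : ∀ (K d : ℕ), d ≤ K →
    ∑ t ∈ Finset.range (2^K), ((2:ℝ)^(max d (Nat.log 2 t)))⁻¹ = (K + 1 - d : ℕ) := by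
  intro K
  induction K with
  | zero =>
    intro d hd
    interval_cases d
    norm_num
  | succ K ih =>
    intro d hd
    rcases Nat.lt_or_ge d (K+1) with hdK | hdK
    · have hdK' : d ≤ K := by omega
      have hsplit : ∑ t ∈ Finset.range (2^(K+1)), ((2:ℝ)^(max d (Nat.log 2 t)))⁻¹
          = ∑ t ∈ Finset.Ico 0 (2^K), ((2:ℝ)^(max d (Nat.log 2 t)))⁻¹
            + ∑ t ∈ Finset.Ico (2^K) (2^(K+1)), ((2:ℝ)^(max d (Nat.log 2 t)))⁻¹ := by
        rw [Finset.sum_Ico_consecutive _ (Nat.zero_le _)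
          (Nat.pow_le_pow_right (by norm_num) (Nat.le_succ K)), ← Finset.range_eq_Ico]
      have h2 : ∑ t ∈ Finset.Ico (2^K) (2^(K+1)), ((2:ℝ)^(max d (Nat.log 2 t)))⁻¹ = 1 := by
        have heq : ∀ t ∈ Finset.Ico (2^K) (2^(K+1)), ((2:ℝ)^(max d (Nat.log 2 t)))⁻¹ = ((2:ℝ)^K)⁻¹ := by
          intro t ht
          rw [Finset.mem_Ico] at ht
          rw [Nat.log_eq_of_pow_le_of_lt_pow ht.1 ht.2, max_eq_right hdK']
        have hcard : 2^(K+1) - 2^K = 2^K := by rw [pow_succ]; omega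
        rw [Finset.sum_congr rfl heq, Finset.sum_const, Nat.card_Ico, hcard, nsmul_eq_mul]
        push_cast
        exact mul_inv_cancel₀ (by positivity)
      rw [hsplit, ← Finset.range_eq_Ico, ih d hdK', h2]
      have h3 : K + 1 + 1 - d = (K + 1 - d) + 1 := by omega
      rw [h3]
      push_cast
      ring
    · have hd1 : d = K+1 := by omega
      subst hd1
      have heq : ∀ t ∈ Finset.range (2^(K+1)),
          ((2:ℝ)^(max (K+1) (Nat.log 2 t)))⁻¹ = ((2:ℝ)^(K+1))⁻¹ := by
        intro t ht
        rw [Finset.mem_range] at ht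
        rw [max_eq_left (by have := log2_le' ht; omega)]
      rw [Finset.sum_congr rfl heq, Finset.sum_const, Finset.card_range, nsmul_eq_mul]
      simp only [Nat.add_sub_cancel_left]
      push_cast
      exact mul_inv_cancel₀ (by positivity)

theorem min_inv_pow (a b : ℕ) :
    min ((2:ℝ)^a)⁻¹ ((2:ℝ)^b)⁻¹ = ((2:ℝ)^(max a b))⁻¹ := by
  rcases le_total a b with h | h
  · rw [max_eq_right h, min_eq_right]
    gcongr <;> norm_num
  · rw [max_eq_left h, min_eq_left]
    gcongr <;> norm_num

theorem max_add_sub (j u e : ℕ) : max j (u + e) = u + max (j - u) e := by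
  rcases le_total j u with h | h
  · rw [max_eq_right (by omega), Nat.sub_eq_zero_of_le h, max_eq_right (Nat.zero_le e)]
  · rw [Nat.max_def, Nat.max_def]
    split_ifs <;> omega

/-! ### The instance -/

def mcnt (k u : ℕ) : ℕ := if u = 0 then 1 else if u ≤ k then 2*4^(u-1) else 2*4^(k-1)
def ncont (k u : ℕ) : ℕ := if u ≤ k then 2^(k+1-u) else 0

abbrev Mach (k : ℕ) := Σ u : Fin (k+2), Fin (mcnt k u.val)
abbrev Job (k : ℕ) := Σ x : Mach k, Fin (ncont k x.1.val)

def lvl {k : ℕ} (i : Job k) : ℕ := i.1.1.val + Nat.log 2 i.2.val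
noncomputable def sp {k : ℕ} (x : Mach k) : ℝ := ((2:ℝ)^(x.1.val))⁻¹
noncomputable def pr {k : ℕ} (i : Job k) : ℝ := ((2:ℝ)^(lvl i))⁻¹
def eqm {k : ℕ} (i : Job k) : Mach k := i.1

theorem grp_le {k : ℕ} (i : Job k) : i.1.1.val ≤ k := by
  by_contra h
  have h2 := i.2.isLt
  simp only [ncont, if_neg (show ¬ i.1.1.val ≤ k by omega)] at h2
  omega

theorem ncont_eq {k : ℕ} (y : Mach k) (hy : y.1.val ≤ k) :
    ncont k y.1.val = 2^(k+1-y.1.val) := by simp only [ncont, if_pos hy]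

theorem lvl_le {k : ℕ} (i : Job k) : lvl i ≤ k := by
  have hu := grp_le i
  have h2 : i.2.val < 2^((k - i.1.1.val) + 1) := by
    have h3 := i.2.isLt
    have h4 : ncont k i.1.1.val = 2^((k - i.1.1.val)+1) := by
      simp only [ncont, if_pos hu]
      congr 1
      omega
    omega
  have := log2_le' h2
  unfold lvl
  omega

theorem grp_le_lvl {k : ℕ} (i : Job k) : i.1.1.val ≤ lvl i := Nat.le_add_right _ _

/-! ### generic defs -/

section Generic
variable {J M : Type*} [Fintype J] [DecidableEq J] [Fintype M] [DecidableEq M]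

def gLoad (p : J → ℝ) (σ : J → M) (y : M) : ℝ :=
  ∑ i ∈ Finset.univ.filter (fun i => σ i = y), p i

noncomputable def gCost (p : J → ℝ) (s : M → ℝ) (σ : J → M) (i : J) : ℝ :=
  (s (σ i))⁻¹ * ∑ i' ∈ Finset.univ.filter (fun i' => σ i' = σ i), min (p i) (p i')

end Generic

theorem sum_fiber {k : ℕ} (f : Job k → ℝ) (y : Mach k) :
    ∑ i ∈ Finset.univ.filter (fun i : Job k => i.1 = y), f i
      = ∑ t : Fin (ncont k y.1.val), f ⟨y, t⟩ := by
  rw [Finset.sum_filter]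
  rw [← Finset.univ_sigma_univ, Finset.sum_sigma]
  have h1 : ∀ x : Mach k, (∑ t : Fin (ncont k x.1.val), if x = y then f ⟨x,t⟩ else 0)
      = if x = y then ∑ t : Fin (ncont k y.1.val), f ⟨y,t⟩ else 0 := by
    intro x
    by_cases hxy : x = y
    · subst hxy; simp
    · simp [hxy]
  have h2 : ∀ (x : Mach k) (t : Fin (ncont k x.1.val)),
      (if (⟨x, t⟩ : Job k).1 = y then f ⟨x,t⟩ else 0) = if x = y then f ⟨x,t⟩ else 0 := by
    intro x t; rfl
  calc ∑ x : Mach k, ∑ t : Fin (ncont k x.1.val), (if (⟨x, t⟩ : Job k).1 = y then f ⟨x,t⟩ else 0)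
      = ∑ x : Mach k, (if x = y then ∑ t : Fin (ncont k y.1.val), f ⟨y,t⟩ else 0) := by
        refine Finset.sum_congr rfl (fun x _ => ?_)
        rw [Finset.sum_congr rfl (fun t _ => h2 x t), h1 x]
    _ = ∑ t : Fin (ncont k y.1.val), f ⟨y,t⟩ := by
        rw [Finset.sum_ite_eq' Finset.univ y]
        simp


theorem sum_fiber_eqm {k : ℕ} (f : Job k → ℝ) (y : Mach k) :
    ∑ i ∈ Finset.univ.filter (fun i : Job k => eqm i = y), f i
      = ∑ t : Fin (ncont k y.1.val), f ⟨y, t⟩ := by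
  rw [← sum_fiber f y]
  rfl

theorem lvl_mk {k : ℕ} (y : Mach k) (t : Fin (ncont k y.1.val)) :
    lvl (⟨y, t⟩ : Job k) = y.1.val + Nat.log 2 t.val := rfl

theorem sum_fib_w {k : ℕ} (y : Mach k) (hy : y.1.val ≤ k) (j : ℕ) (hj : j ≤ k) :
    ∑ i' ∈ Finset.univ.filter (fun i' : Job k => eqm i' = y), ((2:ℝ)^(max j (lvl i')))⁻¹
      = (k + 2 - max j y.1.val : ℕ) * ((2:ℝ)^(y.1.val))⁻¹ := by
  rw [sum_fiber_eqm]
  have hpt : ∀ t : Fin (ncont k y.1.val),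
      ((2:ℝ)^(max j (lvl (⟨y,t⟩ : Job k))))⁻¹
        = ((2:ℝ)^(y.1.val))⁻¹ * ((2:ℝ)^(max (j - y.1.val) (Nat.log 2 t.val)))⁻¹ := by
    intro t
    rw [lvl_mk, max_add_sub j y.1.val (Nat.log 2 t.val), pow_add, mul_inv]
  rw [Finset.sum_congr rfl (fun t _ => hpt t), ← Finset.mul_sum]
  have hrange : ∑ t : Fin (ncont k y.1.val), ((2:ℝ)^(max (j - y.1.val) (Nat.log 2 t.val)))⁻¹
      = ∑ t ∈ Finset.range (ncont k y.1.val), ((2:ℝ)^(max (j - y.1.val) (Nat.log 2 t)))⁻¹ :=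
    Fin.sum_univ_eq_sum_range (fun t => ((2:ℝ)^(max (j - y.1.val) (Nat.log 2 t)))⁻¹) (ncont k y.1.val)
  rw [hrange, ncont_eq y hy, geomSum (k+1-y.1.val) (j - y.1.val) (by omega)]
  have hval : (k+1-y.1.val) + 1 - (j - y.1.val) = k + 2 - max j y.1.val := by
    rcases le_total j y.1.val with h | h
    · rw [max_eq_right h]; omega
    · rw [max_eq_left h]; omega
  rw [hval, mul_comm]

theorem min_pr {k : ℕ} (i i' : Job k) :
    min (pr i) (pr i') = ((2:ℝ)^(max (lvl i) (lvl i')))⁻¹ := min_inv_pow _ _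

theorem pow_ne {u : ℕ} : ((2:ℝ)^u) ≠ 0 := by positivity

theorem cost_formula {k : ℕ} (σ'' : Job k → Mach k) (i : Job k) :
    gCost pr sp σ'' i
      = ((2:ℝ)^((σ'' i).1.val)) * ∑ i' ∈ Finset.univ.filter (fun i' => σ'' i' = σ'' i),
          ((2:ℝ)^(max (lvl i) (lvl i')))⁻¹ := by
  unfold gCost sp
  rw [inv_inv, Finset.sum_congr rfl (fun i' _ => min_pr i i')]

theorem cost_eqm {k : ℕ} (i : Job k) :
    gCost pr sp eqm i = (k + 2 - lvl i : ℕ) := by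
  rw [cost_formula]
  have h1 : (eqm i) = i.1 := rfl
  rw [h1, sum_fib_w i.1 (grp_le i) (lvl i) (lvl_le i)]
  rw [max_eq_left (grp_le_lvl i)]
  rw [← mul_assoc, mul_comm ((2:ℝ)^(i.1.1.val)), mul_assoc,
    mul_inv_cancel₀ pow_ne, mul_one]

theorem load_eqm {k : ℕ} (y : Mach k) (hy : y.1.val ≤ k) :
    gLoad pr eqm y = (k + 2 - y.1.val : ℕ) * ((2:ℝ)^(y.1.val))⁻¹ := by
  unfold gLoad
  have hpt : ∀ i' : Job k, pr i' = ((2:ℝ)^(max 0 (lvl i')))⁻¹ := by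
    intro i'; unfold pr; rw [Nat.zero_max]
  rw [Finset.sum_congr rfl (fun i' _ => hpt i'), sum_fib_w y hy 0 (Nat.zero_le k), Nat.zero_max]

theorem load_extra {k : ℕ} (y : Mach k) (hy : ¬ y.1.val ≤ k) :
    gLoad pr eqm y = 0 := by
  unfold gLoad
  apply Finset.sum_eq_zero
  intro i hi
  rw [Finset.mem_filter] at hi
  exfalso
  exact hy (hi.2 ▸ grp_le i)

/-! ### Strong equilibrium -/

theorem w_nonneg {k : ℕ} (j : ℕ) (i' : Job k) : (0:ℝ) ≤ ((2:ℝ)^(max j (lvl i')))⁻¹ := by positivity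

theorem member_machine {k : ℕ} (S : Finset (Job k)) (σ' : Job k → Mach k)
    (hfix : ∀ i ∉ S, σ' i = eqm i)
    (himp : ∀ i ∈ S, gCost pr sp σ' i < gCost pr sp eqm i)
    (y : Mach k) (hmem : (S.filter (fun i => σ' i = y)).Nonempty) :
    (Finset.univ.filter (fun i : Job k => σ' i = y)).card
      < (Finset.univ.filter (fun i : Job k => eqm i = y)).card := by
  classical
  obtain ⟨ih, hihmem, hmax⟩ := Finset.exists_max_image _ lvl hmem
  rw [Finset.mem_filter] at hihmem
  obtain ⟨hihS, hihy⟩ := hihmem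
  set u : ℕ := y.1.val with hu
  set jh : ℕ := lvl ih with hjh
  have hjk : jh ≤ k := lvl_le ih
  set w : Job k → ℝ := fun i' => ((2:ℝ)^(max jh (lvl i')))⁻¹ with hw
  set fib' : Finset (Job k) := Finset.univ.filter (fun i : Job k => σ' i = y) with hfib'
  set fib : Finset (Job k) := Finset.univ.filter (fun i : Job k => eqm i = y) with hfib
  have hmaxlvl : ∀ i ∈ S, σ' i = y → lvl i ≤ jh := by
    intro i hiS hiy
    exact hmax i (Finset.mem_filter.2 ⟨hiS, hiy⟩)
  -- the improvement inequality for ih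
  have hsum' : (2:ℝ)^u * ∑ i' ∈ fib', w i' < ((k + 2 - jh : ℕ) : ℝ) := by
    have h1 := himp ih hihS
    rw [cost_eqm, cost_formula] at h1
    have h2 : (Finset.univ.filter (fun i' : Job k => σ' i' = σ' ih)) = fib' := by
      rw [hihy]
    rw [h2, hihy] at h1
    exact h1
  have hihfib' : ih ∈ fib' := Finset.mem_filter.2 ⟨Finset.mem_univ _, hihy⟩
  -- extra machines: contradiction
  by_cases huk : u ≤ k
  swap
  · exfalso
    have hukk : u = k + 1 := by have := y.1.isLt; omega
    have hlow : ((2:ℝ)^jh)⁻¹ ≤ ∑ i' ∈ fib', w i' := by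
      have : w ih = ((2:ℝ)^jh)⁻¹ := by rw [hw]; simp [hjh]
      rw [← this]
      exact Finset.single_le_sum (fun i' _ => w_nonneg jh i') hihfib'
    have hpow : ((k + 2 - jh : ℕ) : ℝ) ≤ (2:ℝ)^u * ((2:ℝ)^jh)⁻¹ := by
      have h3 : (2:ℝ)^u * ((2:ℝ)^jh)⁻¹ = (2:ℝ)^(u - jh) := by
        rw [← pow_sub₀ (2:ℝ) (by norm_num) (by omega)]
      rw [h3]
      have h4 := two_pow_ge (u - jh)
      have h5 : (k + 2 - jh : ℕ) = (u - jh) + 1 := by omega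
      rw [h5]
      push_cast
      linarith
    have : (2:ℝ)^u * ((2:ℝ)^jh)⁻¹ ≤ (2:ℝ)^u * ∑ i' ∈ fib', w i' := by
      have : (0:ℝ) < 2^u := by positivity
      nlinarith
    linarith
  -- real machines
  have horig : ∑ i' ∈ fib, w i' = ((k + 2 - max jh u : ℕ) : ℝ) * ((2:ℝ)^u)⁻¹ :=
    sum_fib_w y huk jh hjk
  by_cases hA : u ≤ jh
  · -- Case A : u ≤ jh
    have hmaxeq : max jh u = jh := max_eq_left hA
    -- ζ summation
    have hz0 : ∀ i', lvl i' ≤ jh → 1 - (2:ℝ)^jh * w i' = 0 := by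
      intro i' hl
      rw [hw]
      simp only
      rw [max_eq_left hl, mul_inv_cancel₀ pow_ne, sub_self]
    have hznn : ∀ i', (0:ℝ) ≤ 1 - (2:ℝ)^jh * w i' := by
      intro i'
      rw [hw]
      simp only
      have h1 : (2:ℝ)^jh ≤ (2:ℝ)^(max jh (lvl i')) := by
        apply pow_le_pow_right₀ one_le_two (le_max_left _ _)
      have h2 : (0:ℝ) < (2:ℝ)^(max jh (lvl i')) := by positivity
      have := mul_le_mul_of_nonneg_right h1 (le_of_lt (inv_pos.2 h2))
      rw [mul_inv_cancel₀ (ne_of_gt h2)] at this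
      linarith
    have hzsum : ∑ i' ∈ fib', (1 - (2:ℝ)^jh * w i') ≤ ∑ i' ∈ fib, (1 - (2:ℝ)^jh * w i') := by
      have e1 : ∑ i' ∈ fib', (1 - (2:ℝ)^jh * w i')
          = ∑ i' ∈ fib'.filter (fun i' => jh < lvl i'), (1 - (2:ℝ)^jh * w i') := by
        symm
        apply Finset.sum_filter_of_ne
        intro i' _ hne
        by_contra hc
        exact hne (hz0 i' (by omega))
      have hsub : fib'.filter (fun i' => jh < lvl i') ⊆ fib := by
        intro i' hi'
        rw [Finset.mem_filter] at hi'
        obtain ⟨hi'f, hi'l⟩ := hi'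
        rw [hfib', Finset.mem_filter] at hi'f
        have hiS : i' ∉ S := by
          intro hmem2
          have := hmaxlvl i' hmem2 hi'f.2
          omega
        rw [hfib, Finset.mem_filter]
        exact ⟨Finset.mem_univ _, by rw [← hfix i' hiS]; exact hi'f.2⟩
      rw [e1]
      exact Finset.sum_le_sum_of_subset_of_nonneg hsub (fun i' _ _ => hznn i')
    have hexp' : ∑ i' ∈ fib', (1 - (2:ℝ)^jh * w i')
        = (fib'.card : ℝ) - (2:ℝ)^jh * ∑ i' ∈ fib', w i' := by
      rw [Finset.sum_sub_distrib, Finset.sum_const, Finset.mul_sum]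
      simp
    have hexp : ∑ i' ∈ fib, (1 - (2:ℝ)^jh * w i')
        = (fib.card : ℝ) - (2:ℝ)^jh * ∑ i' ∈ fib, w i' := by
      rw [Finset.sum_sub_distrib, Finset.sum_const, Finset.mul_sum]
      simp
    rw [hexp', hexp] at hzsum
    -- compare sums of w
    have hfibw : (2:ℝ)^jh * ∑ i' ∈ fib, w i'
        = (2:ℝ)^jh * (((k + 2 - jh : ℕ) : ℝ) * ((2:ℝ)^u)⁻¹) := by rw [horig, hmaxeq]
    have hfib'w : (2:ℝ)^jh * ∑ i' ∈ fib', w i'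
        < (2:ℝ)^jh * (((k + 2 - jh : ℕ) : ℝ) * ((2:ℝ)^u)⁻¹) := by
      have hpos : (0:ℝ) < (2:ℝ)^jh := by positivity
      apply mul_lt_mul_of_pos_left _ hpos
      have hpos2 : (0:ℝ) < (2:ℝ)^u := by positivity
      rw [← lt_div_iff₀' hpos2] at hsum'
      rw [div_eq_inv_mul] at hsum'
      calc ∑ i' ∈ fib', w i' < ((2:ℝ)^u)⁻¹ * ((k + 2 - jh : ℕ) : ℝ) := hsum'
        _ = ((k + 2 - jh : ℕ) : ℝ) * ((2:ℝ)^u)⁻¹ := by ring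
    have : (fib'.card : ℝ) < (fib.card : ℝ) := by linarith
    exact_mod_cast this
  · -- Case B : jh < u
    have hBlt : jh < u := by omega
    have hfiblvl : ∀ i' ∈ fib, u ≤ lvl i' := by
      intro i' hi'
      rw [hfib, Finset.mem_filter] at hi'
      have h1 : i'.1 = y := hi'.2
      have := grp_le_lvl i'
      rw [h1] at this
      exact this
    have hQsub : fib'.filter (fun i' => ¬ lvl i' ≤ jh) ⊆ fib := by
      intro i' hi'
      rw [Finset.mem_filter] at hi'
      obtain ⟨hi'f, hi'l⟩ := hi'
      rw [hfib', Finset.mem_filter] at hi'f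
      have hiS : i' ∉ S := by
        intro hmem2
        exact hi'l (hmaxlvl i' hmem2 hi'f.2)
      rw [hfib, Finset.mem_filter]
      exact ⟨Finset.mem_univ _, by rw [← hfix i' hiS]; exact hi'f.2⟩
    have hterm_fib : ∀ i' ∈ fib, (2:ℝ)^u * w i' ≤ 1 := by
      intro i' hi'
      have hl := hfiblvl i' hi'
      have hmaxl : max jh (lvl i') = lvl i' := max_eq_right (by omega)
      rw [hw]
      simp only
      rw [hmaxl]
      have h1 : (2:ℝ)^u ≤ (2:ℝ)^(lvl i') := pow_le_pow_right₀ one_le_two hl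
      have h2 : (0:ℝ) < (2:ℝ)^(lvl i') := by positivity
      rw [mul_inv_le_iff₀ h2, one_mul]
      exact h1
    -- split fib'
    have hsplit := Finset.sum_filter_add_sum_filter_not fib' (fun i' => lvl i' ≤ jh)
      (fun i' => (2:ℝ)^u * w i' - 1)
    set P : Finset (Job k) := fib'.filter (fun i' => lvl i' ≤ jh) with hP
    set Q : Finset (Job k) := fib'.filter (fun i' => ¬ lvl i' ≤ jh) with hQ
    have hPterm : ∀ i' ∈ P, (2:ℝ)^u * w i' - 1 = (2:ℝ)^(u - jh) - 1 := by
      intro i' hi'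
      rw [hP, Finset.mem_filter] at hi'
      rw [hw]
      simp only
      rw [max_eq_left hi'.2, ← pow_sub₀ (2:ℝ) (by norm_num) (by omega)]
    have hPge : ((2:ℝ)^(u - jh) - 1) ≤ ∑ i' ∈ P, ((2:ℝ)^u * w i' - 1) := by
      have hihP : ih ∈ P := by
        rw [hP, Finset.mem_filter]
        exact ⟨hihfib', le_refl _⟩
      have hmon := Finset.single_le_sum (f := fun i' => (2:ℝ)^u * w i' - 1)
        (fun i' hi' => by
          show (0:ℝ) ≤ (2:ℝ)^u * w i' - 1
          rw [hPterm i' hi']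
          have h1 : (1:ℝ) ≤ (2:ℝ)^(u - jh) := one_le_pow₀ one_le_two
          linarith) hihP
      have hmon2 : (2:ℝ)^u * w ih - 1 ≤ ∑ i' ∈ P, ((2:ℝ)^u * w i' - 1) := hmon
      rw [hPterm ih hihP] at hmon2
      exact hmon2
    have hQge : ∑ i' ∈ fib, ((2:ℝ)^u * w i' - 1) ≤ ∑ i' ∈ Q, ((2:ℝ)^u * w i' - 1) := by
      have h1 : ∑ i' ∈ Q, (1 - (2:ℝ)^u * w i') ≤ ∑ i' ∈ fib, (1 - (2:ℝ)^u * w i') :=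
        Finset.sum_le_sum_of_subset_of_nonneg hQsub
          (fun i' hi' _ => by have := hterm_fib i' hi'; linarith)
      have e1 : ∑ i' ∈ Q, (1 - (2:ℝ)^u * w i') = - ∑ i' ∈ Q, ((2:ℝ)^u * w i' - 1) := by
        rw [← Finset.sum_neg_distrib]
        apply Finset.sum_congr rfl
        intro i' _
        ring
      have e2 : ∑ i' ∈ fib, (1 - (2:ℝ)^u * w i') = - ∑ i' ∈ fib, ((2:ℝ)^u * w i' - 1) := by
        rw [← Finset.sum_neg_distrib]
        apply Finset.sum_congr rfl
        intro i' _
        ring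
      rw [e1, e2] at h1
      linarith
    have hfibsum : ∑ i' ∈ fib, ((2:ℝ)^u * w i' - 1)
        = ((k + 2 - u : ℕ) : ℝ) - (fib.card : ℝ) := by
      rw [Finset.sum_sub_distrib, Finset.sum_const, ← Finset.mul_sum, horig,
        max_eq_right (le_of_lt hBlt)]
      rw [← mul_assoc, mul_comm ((2:ℝ)^u), mul_assoc, mul_inv_cancel₀ pow_ne, mul_one]
      simp
    have hfib'sum : ∑ i' ∈ fib', ((2:ℝ)^u * w i' - 1)
        = (2:ℝ)^u * (∑ i' ∈ fib', w i') - (fib'.card : ℝ) := by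
      rw [Finset.sum_sub_distrib, Finset.sum_const, ← Finset.mul_sum]
      simp
    -- assemble
    have hassemble : (2:ℝ)^(u-jh) - 1 + (((k + 2 - u : ℕ) : ℝ) - (fib.card : ℝ))
        ≤ (2:ℝ)^u * (∑ i' ∈ fib', w i') - (fib'.card : ℝ) := by
      rw [← hfib'sum, ← hsplit, ← hfibsum]
      linarith
    have hcast : ((k + 2 - jh : ℕ) : ℝ) = ((k + 2 - u : ℕ) : ℝ) + ((u - jh : ℕ) : ℝ) := by
      have : (k + 2 - jh : ℕ) = (k + 2 - u) + (u - jh) := by omega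
      rw [this]
      push_cast
      ring
    have hpowge := two_pow_ge (u - jh)
    have hfinal : (fib'.card : ℝ) < (fib.card : ℝ) := by
      have h2 : ((u - jh : ℕ) : ℝ) + 1 ≤ (2:ℝ)^(u-jh) := hpowge
      linarith [hsum', hassemble, hcast ▸ hsum']
    exact_mod_cast hfinal

theorem strong_main {k : ℕ} :
    ¬ ∃ (S : Finset (Job k)) (σ' : Job k → Mach k), S.Nonempty ∧
      (∀ i ∉ S, σ' i = eqm i) ∧ ∀ i ∈ S, gCost pr sp σ' i < gCost pr sp eqm i := by
  rintro ⟨S, σ', hne, hfix, himp⟩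
  classical
  have hle : ∀ y : Mach k, (Finset.univ.filter (fun i : Job k => σ' i = y)).card
      ≤ (Finset.univ.filter (fun i : Job k => eqm i = y)).card := by
    intro y
    by_cases hmem : (S.filter (fun i => σ' i = y)).Nonempty
    · exact le_of_lt (member_machine S σ' hfix himp y hmem)
    · apply Finset.card_le_card
      intro i hi
      rw [Finset.mem_filter] at hi ⊢
      refine ⟨hi.1, ?_⟩
      have hiS : i ∉ S := fun hiS => hmem ⟨i, Finset.mem_filter.2 ⟨hiS, hi.2⟩⟩
      rw [← hfix i hiS]
      exact hi.2
  obtain ⟨i0, hi0⟩ := hne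
  have hlt := member_machine S σ' hfix himp (σ' i0) ⟨i0, Finset.mem_filter.2 ⟨hi0, rfl⟩⟩
  have hsum := Finset.sum_lt_sum (fun y (_ : y ∈ Finset.univ) => hle y)
    ⟨σ' i0, Finset.mem_univ _, hlt⟩
  have h1 : ∑ y : Mach k, (Finset.univ.filter (fun i : Job k => σ' i = y)).card
      = Fintype.card (Job k) := by
    rw [← Finset.card_univ]
    exact (Finset.card_eq_sum_card_fiberwise (fun i _ => Finset.mem_univ (σ' i))).symm
  have h2 : ∑ y : Mach k, (Finset.univ.filter (fun i : Job k => eqm i = y)).card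
      = Fintype.card (Job k) := by
    rw [← Finset.card_univ]
    exact (Finset.card_eq_sum_card_fiberwise (fun i _ => Finset.mem_univ (eqm i))).symm
  rw [h1, h2] at hsum
  exact lt_irrefl _ hsum

theorem ne_main {k : ℕ} (i : Job k) (b : Mach k) :
    gCost pr sp eqm i ≤ gCost pr sp (Function.update eqm i b) i := by
  by_contra h
  push_neg at h
  apply strong_main (k := k)
  refine ⟨{i}, Function.update eqm i b, ⟨i, Finset.mem_singleton_self i⟩, ?_, ?_⟩
  · intro i' hi'
    rw [Function.update_of_ne (by simpa using hi')]
  · intro i' hi'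
    rw [Finset.mem_singleton] at hi'
    subst hi'
    exact h

/-! ### Optimum assignment -/

def tset (k j : ℕ) : Finset (Job k) :=
  Finset.univ.filter (fun i => lvl i = j ∧ 2 ≤ i.2.val)

theorem one_le_lvl {k : ℕ} (i : Job k) (h : 2 ≤ i.2.val) : 1 ≤ lvl i := by
  have := one_le_log2 h
  unfold lvl
  omega

theorem mem_tset {k : ℕ} (i : Job k) (h : 2 ≤ i.2.val) : i ∈ tset k (lvl i) :=
  Finset.mem_filter.2 ⟨Finset.mem_univ _, rfl, h⟩

theorem tailsum {k : ℕ} : ∀ j, 1 ≤ j → j ≤ k →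
    ∑ u ∈ Finset.range j, mcnt k u * 2^(j-u) = 2*4^(j-1) := by
  intro j
  induction j with
  | zero => omega
  | succ n ihn =>
    intro _ hnk
    rcases Nat.eq_zero_or_pos n with hn0 | hn1
    · subst hn0
      rw [Finset.sum_range_one]
      simp [mcnt]
    · rw [Finset.sum_range_succ]
      have hstep : ∀ u ∈ Finset.range n, mcnt k u * 2^(n+1-u) = 2 * (mcnt k u * 2^(n-u)) := by
        intro u hu
        rw [Finset.mem_range] at hu
        have : n + 1 - u = (n - u) + 1 := by omega
        rw [this, pow_succ]
        ring
      rw [Finset.sum_congr rfl hstep, ← Finset.mul_sum, ihn hn1 (by omega)]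
      have hmn : mcnt k n = 2*4^(n-1) := by
        rw [mcnt, if_neg (by omega), if_pos (by omega)]
      have hsub : n + 1 - n = 1 := by omega
      rw [hmn, hsub]
      have hn' : n + 1 - 1 = (n-1) + 1 := by omega
      rw [hn', pow_succ]
      ring

theorem inner_count {k : ℕ} (j : ℕ) (hj1 : 1 ≤ j) (hjk : j ≤ k) (x : Mach k) :
    (∑ t : Fin (ncont k x.1.val), if lvl (⟨x,t⟩ : Job k) = j ∧ 2 ≤ t.val then 1 else 0)
      = if x.1.val < j then 2^(j - x.1.val) else 0 := by
  classical
  by_cases hx : x.1.val ≤ k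
  · by_cases huj : x.1.val < j
    · set u : ℕ := x.1.val with hu
      set d : ℕ := j - u with hd
      have hd1 : 1 ≤ d := by omega
      have hcond : ∀ t : ℕ, ((u + Nat.log 2 t = j ∧ 2 ≤ t) ↔ (2^d ≤ t ∧ t < 2^(d+1))) := by
        intro t
        constructor
        · rintro ⟨h1, h2⟩
          have hlog : Nat.log 2 t = d := by omega
          constructor
          · calc 2^d = 2^(Nat.log 2 t) := by rw [hlog]
              _ ≤ t := Nat.pow_log_le_self 2 (by omega)
          · calc t < 2^(Nat.log 2 t + 1) := Nat.lt_pow_succ_log_self (by norm_num) t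
              _ = 2^(d+1) := by rw [hlog]
        · rintro ⟨h1, h2⟩
          have hlog : Nat.log 2 t = d := Nat.log_eq_of_pow_le_of_lt_pow h1 h2
          have h2d : (2:ℕ) ≤ 2^d := by
            calc (2:ℕ) = 2^1 := by norm_num
              _ ≤ 2^d := Nat.pow_le_pow_right (by norm_num) hd1
          exact ⟨by omega, by omega⟩
      have hrange : (∑ t : Fin (ncont k x.1.val), if lvl (⟨x,t⟩ : Job k) = j ∧ 2 ≤ t.val then 1 else 0)
          = ∑ t ∈ Finset.range (ncont k x.1.val), if u + Nat.log 2 t = j ∧ 2 ≤ t then 1 else 0 :=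
        Fin.sum_univ_eq_sum_range (fun t => if u + Nat.log 2 t = j ∧ 2 ≤ t then 1 else 0) _
      rw [hrange]
      have hcongr : ∀ t ∈ Finset.range (ncont k x.1.val),
          (if u + Nat.log 2 t = j ∧ 2 ≤ t then 1 else 0)
            = if 2^d ≤ t ∧ t < 2^(d+1) then 1 else 0 := by
        intro t _
        by_cases hc : u + Nat.log 2 t = j ∧ 2 ≤ t
        · rw [if_pos hc, if_pos ((hcond t).1 hc)]
        · rw [if_neg hc, if_neg (fun hc2 => hc ((hcond t).2 hc2))]
      rw [Finset.sum_congr rfl hcongr, ← Finset.card_filter]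
      have hpow : 2^(d+1) ≤ ncont k x.1.val := by
        rw [ncont_eq x hx]
        exact Nat.pow_le_pow_right (by norm_num) (by omega)
      have hIco : (Finset.range (ncont k x.1.val)).filter (fun t => 2^d ≤ t ∧ t < 2^(d+1))
          = Finset.Ico (2^d) (2^(d+1)) := by
        ext t
        simp only [Finset.mem_filter, Finset.mem_range, Finset.mem_Ico]
        constructor
        · rintro ⟨_, h1, h2⟩; exact ⟨h1, h2⟩
        · rintro ⟨h1, h2⟩; exact ⟨by omega, h1, h2⟩
      rw [hIco, Nat.card_Ico, if_pos huj]
      have : 2^(d+1) - 2^d = 2^d := by rw [pow_succ]; omega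
      rw [this]
    · rw [if_neg huj]
      apply Finset.sum_eq_zero
      intro t _
      have hfalse : ¬ (lvl (⟨x,t⟩ : Job k) = j ∧ 2 ≤ t.val) := by
        rintro ⟨h1, h2⟩
        have hl := one_le_log2 h2
        have he : lvl (⟨x,t⟩ : Job k) = x.1.val + Nat.log 2 t.val := rfl
        omega
      rw [if_neg hfalse]
  · have hncont : ncont k x.1.val = 0 := by simp [ncont, hx]
    rw [if_neg (by omega)]
    apply Finset.sum_eq_zero
    intro t _
    exact absurd t.isLt (by omega)

theorem card_tset {k : ℕ} (j : ℕ) (hj1 : 1 ≤ j) (hjk : j ≤ k) :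
    (tset k j).card = mcnt k j := by
  classical
  have h1 : (tset k j).card = ∑ i : Job k, if lvl i = j ∧ 2 ≤ i.2.val then 1 else 0 :=
    Finset.card_filter _ _
  rw [h1, ← Finset.univ_sigma_univ, Finset.sum_sigma]
  have h2 : ∀ x : Mach k, (∑ t : Fin (ncont k x.1.val),
      if lvl (⟨x,t⟩ : Job k) = j ∧ 2 ≤ t.val then 1 else 0)
        = if x.1.val < j then 2^(j - x.1.val) else 0 := inner_count j hj1 hjk
  rw [Finset.sum_congr rfl (fun x _ => h2 x)]
  -- sum over machines
  have h3 : ∑ x : Mach k, (if x.1.val < j then 2^(j - x.1.val) else 0)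
      = ∑ u : Fin (k+2), mcnt k u.val * (if u.val < j then 2^(j - u.val) else 0) := by
    rw [← Finset.univ_sigma_univ, Finset.sum_sigma]
    apply Finset.sum_congr rfl
    intro u _
    calc ∑ s : Fin (mcnt k u.val), (if (⟨u, s⟩ : Mach k).1.val < j then 2^(j - (⟨u, s⟩ : Mach k).1.val) else 0)
        = ∑ _s : Fin (mcnt k u.val), (if u.val < j then 2^(j - u.val) else 0) := rfl
      _ = mcnt k u.val * (if u.val < j then 2^(j-u.val) else 0) := by
          rw [Finset.sum_const, Finset.card_univ, Fintype.card_fin, smul_eq_mul]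
  rw [h3]
  have h4 : ∑ u : Fin (k+2), mcnt k u.val * (if u.val < j then 2^(j - u.val) else 0)
      = ∑ u ∈ Finset.range (k+2), mcnt k u * (if u < j then 2^(j - u) else 0) :=
    Fin.sum_univ_eq_sum_range (fun u => mcnt k u * (if u < j then 2^(j - u) else 0)) (k+2)
  rw [h4]
  have h5 : ∑ u ∈ Finset.range (k+2), mcnt k u * (if u < j then 2^(j - u) else 0)
      = ∑ u ∈ Finset.range j, mcnt k u * (if u < j then 2^(j - u) else 0) := by
    symm
    apply Finset.sum_subset
    · intro u hu
      rw [Finset.mem_range] at hu ⊢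
      omega
    · intro u _ hu
      rw [Finset.mem_range] at hu
      rw [if_neg hu, mul_zero]
  rw [h5]
  have h6 : ∀ u ∈ Finset.range j, mcnt k u * (if u < j then 2^(j - u) else 0)
      = mcnt k u * 2^(j-u) := by
    intro u hu
    rw [Finset.mem_range] at hu
    rw [if_pos hu]
  rw [Finset.sum_congr rfl h6, tailsum j hj1 hjk]
  rw [mcnt, if_neg (by omega), if_pos hjk]

noncomputable def tau {k : ℕ} : Job k → Mach k := fun i =>
  if h : 2 ≤ i.2.val ∧ 1 ≤ lvl i ∧ lvl i ≤ k then
    ⟨⟨lvl i, by omega⟩,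
      Fin.cast (card_tset (lvl i) h.2.1 h.2.2) ((tset k (lvl i)).equivFin ⟨i, mem_tset i h.1⟩)⟩
  else i.1

theorem equivFin_val_inj {α : Type*} [DecidableEq α] (s t : Finset α) (hst : s = t)
    (a : {x // x ∈ s}) (b : {x // x ∈ t})
    (h : ((s.equivFin) a).val = ((t.equivFin) b).val) : (a : α) = (b : α) := by
  subst hst
  have := s.equivFin.injective (Fin.ext h)
  rw [this]

theorem tau_small {k : ℕ} (i : Job k) (h : i.2.val < 2) : tau i = i.1 := by
  unfold tau
  rw [dif_neg]
  rintro ⟨h1, _⟩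
  omega

theorem tau_big {k : ℕ} (i : Job k) (h : 2 ≤ i.2.val) :
    tau i = ⟨⟨lvl i, by have := lvl_le i; omega⟩,
      Fin.cast (card_tset (lvl i) (one_le_lvl i h) (lvl_le i))
        ((tset k (lvl i)).equivFin ⟨i, mem_tset i h⟩)⟩ := by
  unfold tau
  rw [dif_pos ⟨h, one_le_lvl i h, lvl_le i⟩]

theorem tau_big_lvl {k : ℕ} (i : Job k) (h : 2 ≤ i.2.val) : lvl i = (tau i).1.val := by
  rw [tau_big i h]

theorem tau_big_snd {k : ℕ} (i : Job k) (h : 2 ≤ i.2.val) :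
    (tau i).2.val = ((tset k (lvl i)).equivFin ⟨i, mem_tset i h⟩).val := by
  rw [tau_big i h]
  simp [Fin.coe_cast]

theorem tau_inj {k : ℕ} (i i' : Job k) (h : 2 ≤ i.2.val) (h' : 2 ≤ i'.2.val)
    (heq : tau i = tau i') : i = i' := by
  have hl : lvl i = lvl i' := by
    rw [tau_big_lvl i h, tau_big_lvl i' h', heq]
  have hsnd : ((tset k (lvl i)).equivFin ⟨i, mem_tset i h⟩).val
      = ((tset k (lvl i')).equivFin ⟨i', mem_tset i' h'⟩).val := by
    rw [← tau_big_snd i h, ← tau_big_snd i' h', heq]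
  exact equivFin_val_inj (tset k (lvl i)) (tset k (lvl i')) (congrArg (tset k) hl)
    ⟨i, mem_tset i h⟩ ⟨i', mem_tset i' h'⟩ hsnd

theorem sp_pos {k : ℕ} (y : Mach k) : 0 < sp y := by
  unfold sp
  positivity

theorem pr_pos {k : ℕ} (i : Job k) : 0 < pr i := by
  unfold pr
  positivity

theorem load_tau {k : ℕ} (y : Mach k) : gLoad pr tau y ≤ 3 * sp y := by
  classical
  unfold gLoad
  rw [← Finset.sum_filter_add_sum_filter_not
    (Finset.univ.filter (fun i : Job k => tau i = y)) (fun i => 2 ≤ i.2.val) pr]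
  have hB1 : ∑ i ∈ (Finset.univ.filter (fun i : Job k => tau i = y)).filter
      (fun i => 2 ≤ i.2.val), pr i ≤ ((2:ℝ)^(y.1.val))⁻¹ := by
    set Q := (Finset.univ.filter (fun i : Job k => tau i = y)).filter (fun i => 2 ≤ i.2.val)
      with hQ
    have hmem : ∀ i ∈ Q, tau i = y ∧ 2 ≤ i.2.val := by
      intro i hi
      rw [hQ, Finset.mem_filter, Finset.mem_filter] at hi
      exact ⟨hi.1.2, hi.2⟩
    have hcard : Q.card ≤ 1 := by
      rw [Finset.card_le_one]
      intro a ha b hb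
      exact tau_inj a b (hmem a ha).2 (hmem b hb).2 (by rw [(hmem a ha).1, (hmem b hb).1])
    have hterm : ∀ i ∈ Q, pr i = ((2:ℝ)^(y.1.val))⁻¹ := by
      intro i hi
      have h1 : lvl i = y.1.val := by
        rw [tau_big_lvl i (hmem i hi).2, (hmem i hi).1]
      unfold pr
      rw [h1]
    rw [Finset.sum_congr rfl hterm, Finset.sum_const]
    have : (Q.card : ℝ) * ((2:ℝ)^(y.1.val))⁻¹ ≤ 1 * ((2:ℝ)^(y.1.val))⁻¹ := by
      apply mul_le_mul_of_nonneg_right _ (by positivity)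
      exact_mod_cast hcard
    rw [nsmul_eq_mul]
    linarith
  have hB2 : ∑ i ∈ (Finset.univ.filter (fun i : Job k => tau i = y)).filter
      (fun i => ¬ 2 ≤ i.2.val), pr i ≤ 2 * ((2:ℝ)^(y.1.val))⁻¹ := by
    set P := (Finset.univ.filter (fun i : Job k => tau i = y)).filter
      (fun i => ¬ 2 ≤ i.2.val) with hP
    have hmem : ∀ i ∈ P, i.1 = y ∧ i.2.val < 2 := by
      intro i hi
      rw [hP, Finset.mem_filter, Finset.mem_filter] at hi
      have hsmall : i.2.val < 2 := by omega
      exact ⟨by rw [← tau_small i hsmall]; exact hi.1.2, hsmall⟩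
    have hcard : P.card ≤ 2 := by
      have := Finset.card_le_card_of_injOn (f := fun i : Job k => i.2.val)
        (t := Finset.range 2)
        (fun i hi => Finset.mem_range.2 (hmem i hi).2)
        (by
          intro a ha b hb hab
          have ha1 := (hmem a ha).1
          have hb1 := (hmem b hb).1
          rcases a with ⟨xa, ta⟩
          rcases b with ⟨xb, tb⟩
          simp only at ha1 hb1 hab
          subst ha1
          subst hb1
          congr 1
          exact Fin.ext hab)
      simpa using this
    have hterm : ∀ i ∈ P, pr i = ((2:ℝ)^(y.1.val))⁻¹ := by
      intro i hi
      have h0 : Nat.log 2 i.2.val = 0 := by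
        have h2 := (hmem i hi).2
        have h1 : i.2.val < 2^(0+1) := by simpa using h2
        have := log2_le' h1
        omega
      have h1 : lvl i = y.1.val := by
        unfold lvl
        rw [h0, (hmem i hi).1]
        omega
      unfold pr
      rw [h1]
    rw [Finset.sum_congr rfl hterm, Finset.sum_const]
    have : (P.card : ℝ) * ((2:ℝ)^(y.1.val))⁻¹ ≤ 2 * ((2:ℝ)^(y.1.val))⁻¹ := by
      apply mul_le_mul_of_nonneg_right _ (by positivity)
      exact_mod_cast hcard
    rw [nsmul_eq_mul]
    linarith
  have hsp : sp y = ((2:ℝ)^(y.1.val))⁻¹ := rfl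
  rw [hsp]
  linarith

/-! ### cardinalities and makespan -/

theorem geo_sum (k : ℕ) : ∑ u ∈ Finset.range k, 2*4^u = 2*(4^k - 1)/3 := by
  have h3 : 3 * (∑ u ∈ Finset.range k, 2*4^u) = 2*(4^k - 1) := by
    induction k with
    | zero => simp
    | succ n ihn =>
      rw [Finset.sum_range_succ, Nat.mul_add, ihn, pow_succ]
      have h4 : 1 ≤ 4^n := Nat.one_le_pow _ _ (by norm_num)
      omega
  omega

theorem card_mach (k : ℕ) (hk : 1 ≤ k) :
    Fintype.card (Mach k) = 1 + 2 * (4 ^ k - 1) / 3 + 2 * 4 ^ (k - 1) := by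
  rw [Fintype.card_sigma]
  have h1 : ∑ u : Fin (k+2), Fintype.card (Fin (mcnt k u.val))
      = ∑ u : Fin (k+2), mcnt k u.val := by
    apply Finset.sum_congr rfl
    intro u _
    rw [Fintype.card_fin]
  rw [h1, Fin.sum_univ_eq_sum_range (fun u => mcnt k u) (k+2)]
  rw [Finset.sum_range_succ, Finset.sum_range_succ']
  have h2 : ∀ u ∈ Finset.range k, mcnt k (u+1) = 2*4^u := by
    intro u hu
    rw [Finset.mem_range] at hu
    rw [mcnt, if_neg (by omega), if_pos (by omega)]
    simp
  rw [Finset.sum_congr rfl h2, geo_sum]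
  have hm0 : mcnt k 0 = 1 := by rw [mcnt, if_pos rfl]
  have hmk1 : mcnt k (k+1) = 2*4^(k-1) := by rw [mcnt, if_neg (by omega), if_neg (by omega)]
  rw [hm0, hmk1]
  omega

theorem load_div_le {k : ℕ} (y : Mach k) :
    gLoad pr eqm y / sp y ≤ (k : ℝ) + 2 := by
  by_cases hy : y.1.val ≤ k
  · rw [load_eqm y hy]
    have hsp : sp y = ((2:ℝ)^(y.1.val))⁻¹ := rfl
    rw [hsp, mul_div_assoc, div_self (by positivity), mul_one]
    have : (k + 2 - y.1.val : ℕ) ≤ k + 2 := by omega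
    calc ((k + 2 - y.1.val : ℕ) : ℝ) ≤ ((k + 2 : ℕ) : ℝ) := by exact_mod_cast this
      _ = (k : ℝ) + 2 := by push_cast; ring
  · rw [load_extra y hy, zero_div]
    positivity

theorem load_div_eq {k : ℕ} :
    ∃ y : Mach k, gLoad pr eqm y / sp y = (k : ℝ) + 2 := by
  have hm0 : 0 < mcnt k 0 := by rw [mcnt, if_pos rfl]; norm_num
  refine ⟨⟨⟨0, by omega⟩, ⟨0, hm0⟩⟩, ?_⟩
  set y : Mach k := ⟨⟨0, by omega⟩, ⟨0, hm0⟩⟩ with hy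
  have hy0 : y.1.val = 0 := rfl
  have hyk : y.1.val ≤ k := by omega
  rw [load_eqm y hyk]
  have hsp : sp y = ((2:ℝ)^(y.1.val))⁻¹ := rfl
  rw [hsp, mul_div_assoc, div_self (by positivity), mul_one, hy0]
  push_cast
  ring

theorem load_tau_div {k : ℕ} (y : Mach k) : gLoad pr tau y / sp y ≤ 3 := by
  rw [div_le_iff₀ (sp_pos y)]
  have := load_tau (k := k) y
  linarith [load_tau (k := k) y]

/-! ### transport to `Fin` types -/

section Transport
variable {J M : Type*} [Fintype J] [DecidableEq J] [Fintype M] [DecidableEq M]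
variable {nn mm : ℕ} (f : J ≃ Fin nn) (e : M ≃ Fin mm)

theorem uLoad_eq (p : J → ℝ) (σ : J → M) (y : M) :
    uLoad (fun i => p (f.symm i)) (fun i => e (σ (f.symm i))) (e y) = gLoad p σ y := by
  unfold uLoad gLoad
  symm
  apply Finset.sum_equiv f
  · intro i
    simp
  · intro i _
    simp

theorem uCost_eq (p : J → ℝ) (s : M → ℝ) (σ : J → M) (i : J) :
    uEquiCost (fun i' => p (f.symm i')) (fun y => s (e.symm y))
      (fun i' => e (σ (f.symm i'))) (f i) = gCost p s σ i := by
  unfold uEquiCost gCost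
  congr 1
  · simp
  · symm
    apply Finset.sum_equiv f
    · intro i'
      simp
    · intro i' _
      simp

theorem update_eq (σ : J → M) (i : J) (b : M) :
    (Function.update (fun i' => e (σ (f.symm i'))) (f i) (e b))
      = fun i' => e ((Function.update σ i b) (f.symm i')) := by
  funext i'
  by_cases h : i' = f i
  · subst h
    rw [Function.update_self]
    rw [Equiv.symm_apply_apply, Function.update_self]
  · rw [Function.update_of_ne h, Function.update_of_ne]
    intro hc
    apply h
    rw [← hc]
    simp

end Transport

end EquiPoA


/-- The price of anarchy of EQUI on uniform machines is `Ω(log m)`: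
for every `k ≥ 1` there is an instance with `m = 1 + (2/3)(4^k − 1) + 2·4^{k−1}`
machines whose optimal makespan is at most `3` and which admits a (strong) Nash
equilibrium of makespan `k + 2`. -/
theorem equi_uniform_poa_lower :
    ∀ k : ℕ, 1 ≤ k →
    ∃ (mm nn : ℕ) (s : Fin mm → ℝ) (p : Fin nn → ℝ) (σ : Fin nn → Fin mm),
      mm = 1 + 2 * (4 ^ k - 1) / 3 + 2 * 4 ^ (k - 1) ∧
      (∀ x, 0 < s x) ∧ (∀ i, 0 < p i) ∧
      uEquiNE p s σ ∧ uEquiStrongNE p s σ ∧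
      (∀ x, uLoad p σ x / s x ≤ (k : ℝ) + 2) ∧
      (∃ x, uLoad p σ x / s x = (k : ℝ) + 2) ∧
      (∃ τ : Fin nn → Fin mm, ∀ x, uLoad p τ x / s x ≤ 3) := by
  intro k hk
  classical
  open EquiPoA in
  obtain ⟨e⟩ : Nonempty (Mach k ≃ Fin (Fintype.card (Mach k))) := ⟨Fintype.equivFin (Mach k)⟩
  obtain ⟨f⟩ : Nonempty (Job k ≃ Fin (Fintype.card (Job k))) := ⟨Fintype.equivFin (Job k)⟩
  refine ⟨Fintype.card (Mach k), Fintype.card (Job k),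
    (fun y => sp (e.symm y)), (fun i => pr (f.symm i)),
    (fun i => e (eqm (f.symm i))), card_mach k hk, ?_, ?_, ?_, ?_, ?_, ?_, ?_⟩
  · intro y
    exact sp_pos _
  · intro i
    exact pr_pos _
  · -- NE
    intro i' b'
    have hi' : i' = f (f.symm i') := (f.apply_symm_apply i').symm
    have hb' : b' = e (e.symm b') := (e.apply_symm_apply b').symm
    rw [hi', hb', uCost_eq f e pr sp eqm (f.symm i'), update_eq f e eqm (f.symm i') (e.symm b'),
      uCost_eq f e pr sp (Function.update eqm (f.symm i') (e.symm b')) (f.symm i')]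
    exact ne_main _ _
  · -- strong NE
    rintro ⟨S', σ'', hne, hfix, himp⟩
    apply strong_main (k := k)
    refine ⟨S'.image f.symm, (fun i => e.symm (σ'' (f i))), hne.image _, ?_, ?_⟩
    · intro i hiS
      have hfiS : f i ∉ S' := by
        intro hc
        exact hiS (Finset.mem_image.2 ⟨f i, hc, f.symm_apply_apply i⟩)
      show e.symm (σ'' (f i)) = eqm i
      rw [hfix (f i) hfiS]
      show e.symm (e (eqm (f.symm (f i)))) = eqm i
      rw [Equiv.symm_apply_apply, Equiv.symm_apply_apply]
    · intro i hiS
      have hcost1 : gCost pr sp (fun i0 => e.symm (σ'' (f i0))) i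
          = uEquiCost (fun i' => pr (f.symm i')) (fun y => sp (e.symm y)) σ'' (f i) := by
        rw [← uCost_eq f e pr sp (fun i0 => e.symm (σ'' (f i0))) i]
        congr 1
        funext i0
        show e (e.symm (σ'' (f (f.symm i0)))) = σ'' i0
        rw [Equiv.apply_symm_apply, Equiv.apply_symm_apply]
      have hcost2 : gCost pr sp eqm i
          = uEquiCost (fun i' => pr (f.symm i')) (fun y => sp (e.symm y))
              (fun i' => e (eqm (f.symm i'))) (f i) := by
        rw [uCost_eq f e pr sp eqm i]
      rw [hcost1, hcost2]
      apply himp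
      obtain ⟨i0, hi0S, hi0⟩ := Finset.mem_image.1 hiS
      rw [← hi0, Equiv.apply_symm_apply]
      exact hi0S
  · -- makespan upper bound
    intro x
    have hx : x = e (e.symm x) := (e.apply_symm_apply x).symm
    rw [hx, uLoad_eq f e pr eqm (e.symm x)]
    have hsp : (fun y => sp (e.symm y)) (e (e.symm x)) = sp (e.symm x) :=
      congrArg sp (e.symm_apply_apply (e.symm x))
    rw [hsp]
    exact load_div_le _
  · -- makespan attained
    obtain ⟨y, hy⟩ := load_div_eq (k := k)
    refine ⟨e y, ?_⟩
    rw [uLoad_eq f e pr eqm y]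
    have hsp : (fun y0 => sp (e.symm y0)) (e y) = sp y :=
      congrArg sp (e.symm_apply_apply y)
    rw [hsp]
    exact hy
  · -- optimum
    refine ⟨(fun i => e (tau (f.symm i))), ?_⟩
    intro x
    have hx : x = e (e.symm x) := (e.apply_symm_apply x).symm
    rw [hx, uLoad_eq f e pr tau (e.symm x)]
    have hsp : (fun y => sp (e.symm y)) (e (e.symm x)) = sp (e.symm x) :=
      congrArg sp (e.symm_apply_apply (e.symm x))
    rw [hsp]
    exact load_tau_div _
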